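/- The second-family Nédélec (face element) space W²_p(T) = {v : v(x) = p(x) + q(x)·x, p ∈ 𝐏_p, q ∈ P_p} equals 𝐏_p(ℝ³) + D_a(P_p(ℝ³)) for any point a, where D_a is the degree-2 Poincaré lifting. -/

import Mathlib

open MeasureTheory

/-- Partial derivative of a scalar function on ℝ³. -/
noncomputable def pd3 (f : (Fin 3 → ℝ) → ℝ) (i : Fin 3) (x : Fin 3 → ℝ) : ℝ :=
  fderiv ℝ f x (Pi.single i 1)

/-- Curl of a vector field on ℝ³. -/
noncomputable def curl3 (u : (Fin 3 → ℝ) → (Fin 3 → ℝ)) (x : Fin 3 → ℝ) : Fin 3 → ℝ :=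
  ![pd3 (fun y => u y 2) 1 x - pd3 (fun y => u y 1) 2 x,
    pd3 (fun y => u y 0) 2 x - pd3 (fun y => u y 2) 0 x,
    pd3 (fun y => u y 1) 0 x - pd3 (fun y => u y 0) 1 x]

/-- Divergence of a vector field on ℝ³. -/
noncomputable def div3 (u : (Fin 3 → ℝ) → (Fin 3 → ℝ)) (x : Fin 3 → ℝ) : ℝ :=
  ∑ i, pd3 (fun y => u y i) i x

/-- Gradient of a scalar field on ℝ³. -/
noncomputable def grad3 (f : (Fin 3 → ℝ) → ℝ) (x : Fin 3 → ℝ) : Fin 3 → ℝ :=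
  fun i => pd3 f i x

/-- Cross product in ℝ³. -/
def cross3 (a b : Fin 3 → ℝ) : Fin 3 → ℝ :=
  ![a 1 * b 2 - a 2 * b 1, a 2 * b 0 - a 0 * b 2, a 0 * b 1 - a 1 * b 0]

/-- Euclidean dot product in ℝ³. -/
def dot3 (a b : Fin 3 → ℝ) : ℝ := ∑ i, a i * b i

/-- `f` is (given by) a polynomial of total degree ≤ p. -/
def IsPoly3 (p : ℕ) (f : (Fin 3 → ℝ) → ℝ) : Prop :=
  ∃ q : MvPolynomial (Fin 3) ℝ, q.totalDegree ≤ p ∧ ∀ x, f x = MvPolynomial.eval x q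

/-- Vector field whose components are polynomials of total degree ≤ p. -/
def IsPolyVec3 (p : ℕ) (u : (Fin 3 → ℝ) → (Fin 3 → ℝ)) : Prop :=
  ∀ i, IsPoly3 p (fun x => u x i)

/-- First-family Nédélec space of degree p (as a set of vector fields). -/
def NedelecW1 (p : ℕ) : Set ((Fin 3 → ℝ) → (Fin 3 → ℝ)) :=
  {v | ∃ P Q, IsPolyVec3 p P ∧ IsPolyVec3 p Q ∧ ∀ x, v x = P x + cross3 (Q x) x}

/-- Face-element (second family) space of degree p. -/
def NedelecW2 (p : ℕ) : Set ((Fin 3 → ℝ) → (Fin 3 → ℝ)) :=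
  {v | ∃ P q, IsPolyVec3 p P ∧ IsPoly3 p q ∧ ∀ x, v x = P x + q x • x}

/-- Poincaré lifting with center a. -/
noncomputable def Rlift (a : Fin 3 → ℝ) (u : (Fin 3 → ℝ) → (Fin 3 → ℝ))
    (x : Fin 3 → ℝ) : Fin 3 → ℝ :=
  cross3 (∫ t in (0:ℝ)..1, t • u (a + t • (x - a))) (x - a)

/-- Degree-2 Poincaré lifting with center a. -/
noncomputable def Dlift (a : Fin 3 → ℝ) (u : (Fin 3 → ℝ) → ℝ)
    (x : Fin 3 → ℝ) : Fin 3 → ℝ :=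
  (∫ t in (0:ℝ)..1, t ^ 2 * u (a + t • (x - a))) • (x - a)



open MvPolynomial in
private theorem eval_smul_homog' {n : ℕ} {φ : MvPolynomial (Fin 3) ℝ} (h : φ.IsHomogeneous n)
    (t : ℝ) (y : Fin 3 → ℝ) : eval (t • y) φ = t ^ n * eval y φ := by
  rw [eval_eq, eval_eq, Finset.mul_sum]
  refine Finset.sum_congr rfl fun d hd => ?_
  have hdeg : ∑ i ∈ d.support, d i = n := by
    have := h (mem_support_iff.mp hd)
    simpa [Finsupp.weight_apply, Finsupp.sum, mul_one] using this
  have : ∏ i ∈ d.support, (t • y) i ^ d i = t ^ n * ∏ i ∈ d.support, y i ^ d i := by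
    simp only [Pi.smul_apply, smul_eq_mul, mul_pow, Finset.prod_mul_distrib,
      Finset.prod_pow_eq_pow_sum, hdeg]
  rw [this]; ring

open MvPolynomial in
private theorem totalDegree_bind_le' (f : Fin 3 → MvPolynomial (Fin 3) ℝ)
    (hf : ∀ i, (f i).totalDegree ≤ 1) (φ : MvPolynomial (Fin 3) ℝ) :
    (bind₁ f φ).totalDegree ≤ φ.totalDegree := by
  conv_lhs => rw [φ.as_sum]
  rw [map_sum]
  apply totalDegree_finsetSum_le
  intro d hd
  rw [bind₁_monomial]
  refine le_trans (totalDegree_mul _ _) ?_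
  refine le_trans (add_le_add (totalDegree_C _).le (totalDegree_finset_prod _ _)) ?_
  simp only [zero_add]
  refine le_trans (Finset.sum_le_sum fun i _ => (totalDegree_pow _ _).trans
    (Nat.mul_le_mul_left _ (hf i))) ?_
  simp only [mul_one]
  exact le_totalDegree hd

open MvPolynomial in
private theorem eval_bind₁' (f : Fin 3 → MvPolynomial (Fin 3) ℝ) (φ : MvPolynomial (Fin 3) ℝ)
    (z : Fin 3 → ℝ) : eval z (bind₁ f φ) = eval (fun i => eval z (f i)) φ := by
  have h : ∀ (g : MvPolynomial (Fin 3) ℝ) (w : Fin 3 → ℝ), aeval w g = eval w g := fun g w => rfl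
  rw [← h, aeval_bind₁]
  simp [h]

open MvPolynomial in
private theorem integral_key' (g : MvPolynomial (Fin 3) ℝ) (N : ℕ) (hN : g.totalDegree < N)
    (y : Fin 3 → ℝ) :
    (∫ t in (0:ℝ)..1, t ^ 2 * eval (t • y) g)
      = ∑ k ∈ Finset.range N, ((k:ℝ)+3)⁻¹ * eval y (homogeneousComponent k g) := by
  have hsum : ∑ k ∈ Finset.range N, homogeneousComponent k g = g := by
    conv_rhs => rw [← sum_homogeneousComponent g]
    symm
    apply Finset.sum_subset (Finset.range_subset_range.mpr (by omega))
    intro k _ hk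
    exact homogeneousComponent_eq_zero _ _ (by simp only [Finset.mem_range, not_lt] at hk; omega)
  have hg : ∀ t : ℝ, t ^ 2 * eval (t • y) g
      = ∑ k ∈ Finset.range N, t ^ (k + 2) * eval y (homogeneousComponent k g) := by
    intro t
    conv_lhs => rw [← hsum]
    rw [map_sum, Finset.mul_sum]
    refine Finset.sum_congr rfl fun k _ => ?_
    rw [eval_smul_homog' (homogeneousComponent_isHomogeneous k g)]
    ring
  simp only [hg]
  rw [intervalIntegral.integral_finset_sum]
  · refine Finset.sum_congr rfl fun k _ => ?_
    rw [intervalIntegral.integral_mul_const, integral_pow]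
    push_cast
    ring_nf
  · intro k _
    exact Continuous.intervalIntegrable (by continuity) _ _

private theorem sub_deg_le' (a : Fin 3 → ℝ) (i : Fin 3) :
    ((MvPolynomial.X i : MvPolynomial (Fin 3) ℝ) - MvPolynomial.C (a i)).totalDegree ≤ 1 :=
  (MvPolynomial.totalDegree_sub _ _).trans
    (by simp [MvPolynomial.totalDegree_X, MvPolynomial.totalDegree_C])

private theorem add_deg_le' (a : Fin 3 → ℝ) (i : Fin 3) :
    ((MvPolynomial.X i : MvPolynomial (Fin 3) ℝ) + MvPolynomial.C (a i)).totalDegree ≤ 1 :=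
  (MvPolynomial.totalDegree_add _ _).trans
    (by simp [MvPolynomial.totalDegree_X, MvPolynomial.totalDegree_C])

open MvPolynomial in
/-- The Poincaré integral of a polynomial of degree ≤ d is a polynomial of degree ≤ d. -/
private theorem dlift_rep' (a : Fin 3 → ℝ) (Q : MvPolynomial (Fin 3) ℝ) :
    ∃ R : MvPolynomial (Fin 3) ℝ, R.totalDegree ≤ Q.totalDegree ∧
      ∀ x : Fin 3 → ℝ, (∫ t in (0:ℝ)..1, t ^ 2 * eval (a + t • (x - a)) Q) = eval x R := by
  set g := bind₁ (fun i => X i + C (a i)) Q with hgdef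
  have hgQ : g.totalDegree ≤ Q.totalDegree := totalDegree_bind_le' _ (add_deg_le' a) Q
  set G := ∑ k ∈ Finset.range (g.totalDegree + 1),
    ((k:ℝ)+3)⁻¹ • homogeneousComponent k g with hGdef
  have hGdeg : G.totalDegree ≤ g.totalDegree := by
    apply totalDegree_finsetSum_le
    intro k hk
    refine (totalDegree_smul_le _ _).trans ?_
    exact (homogeneousComponent_isHomogeneous k g).totalDegree_le.trans
      (by simpa using Nat.lt_succ_iff.mp (Finset.mem_range.mp hk))
  refine ⟨bind₁ (fun i => X i - C (a i)) G,
    (totalDegree_bind_le' _ (sub_deg_le' a) G).trans (hGdeg.trans hgQ), fun x => ?_⟩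
  have hev : ∀ t : ℝ, eval (a + t • (x - a)) Q = eval (t • (x - a)) g := by
    intro t
    rw [hgdef, eval_bind₁']
    have harg : (fun i => eval (t • (x - a)) (X i + C (a i))) = a + t • (x - a) := by
      funext i
      simp only [map_add, eval_X, eval_C, Pi.add_apply, Pi.smul_apply, Pi.sub_apply, smul_eq_mul]
      ring
    rw [harg]
  simp only [hev]
  rw [integral_key' g (g.totalDegree + 1) (lt_add_one _) (x - a), eval_bind₁']
  have : (fun i => eval x (X i - C (a i))) = x - a := by
    funext i; simp
  rw [this, hGdef, map_sum]
  refine Finset.sum_congr rfl fun k _ => ?_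
  rw [smul_eval]

open MvPolynomial in
/-- Every polynomial of degree ≤ d arises as the Poincaré integral of one of degree ≤ d. -/
private theorem dlift_surj' (a : Fin 3 → ℝ) (Q : MvPolynomial (Fin 3) ℝ) :
    ∃ R : MvPolynomial (Fin 3) ℝ, R.totalDegree ≤ Q.totalDegree ∧
      ∀ x : Fin 3 → ℝ, (∫ t in (0:ℝ)..1, t ^ 2 * eval (a + t • (x - a)) R) = eval x Q := by
  set g := bind₁ (fun i => X i + C (a i)) Q with hgdef
  have hgQ : g.totalDegree ≤ Q.totalDegree := totalDegree_bind_le' _ (add_deg_le' a) Q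
  set N := g.totalDegree + 1 with hNdef
  set H := ∑ k ∈ Finset.range N, ((k:ℝ)+3) • homogeneousComponent k g with hHdef
  have hHdeg : H.totalDegree ≤ g.totalDegree := by
    apply totalDegree_finsetSum_le
    intro k hk
    refine (totalDegree_smul_le _ _).trans ?_
    exact (homogeneousComponent_isHomogeneous k g).totalDegree_le.trans
      (by simpa [hNdef] using Nat.lt_succ_iff.mp (Finset.mem_range.mp hk))
  refine ⟨bind₁ (fun i => X i - C (a i)) H,
    (totalDegree_bind_le' _ (sub_deg_le' a) H).trans (hHdeg.trans hgQ), fun x => ?_⟩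
  have hev : ∀ t : ℝ, eval (a + t • (x - a)) (bind₁ (fun i => X i - C (a i)) H)
      = eval (t • (x - a)) H := by
    intro t
    rw [eval_bind₁']
    have harg : (fun i => eval (a + t • (x - a)) (X i - C (a i))) = t • (x - a) := by
      funext i
      simp only [map_sub, eval_X, eval_C, Pi.add_apply, Pi.smul_apply, Pi.sub_apply, smul_eq_mul]
      ring
    rw [harg]
  simp only [hev]
  rw [integral_key' H N (Nat.lt_succ_iff.mpr hHdeg) (x - a)]
  have hcomp : ∀ k ∈ Finset.range N,
      homogeneousComponent k H = ((k:ℝ)+3) • homogeneousComponent k g := by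
    intro k hk
    rw [hHdef, map_sum]
    have : ∀ j ∈ Finset.range N, homogeneousComponent k (((j:ℝ)+3) • homogeneousComponent j g)
        = if k = j then ((j:ℝ)+3) • homogeneousComponent j g else 0 := by
      intro j _
      rw [LinearMap.map_smul, homogeneousComponent_of_mem
        ((mem_homogeneousSubmodule _ _).mpr (homogeneousComponent_isHomogeneous j g))]
      by_cases h : k = j <;> simp [h]
    rw [Finset.sum_congr rfl this, Finset.sum_ite_eq _ k
      (fun j => ((j:ℝ)+3) • homogeneousComponent j g), if_pos hk]
  calc ∑ k ∈ Finset.range N, ((k:ℝ)+3)⁻¹ * eval (x - a) (homogeneousComponent k H)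
      = ∑ k ∈ Finset.range N, eval (x - a) (homogeneousComponent k g) := by
        refine Finset.sum_congr rfl fun k hk => ?_
        rw [hcomp k hk, smul_eval, ← mul_assoc, inv_mul_cancel₀ (by positivity), one_mul]
    _ = eval (x - a) g := by rw [← map_sum, hNdef, sum_homogeneousComponent]
    _ = eval x Q := by
        rw [hgdef, eval_bind₁']
        have harg : (fun i => eval (x - a) (X i + C (a i))) = x := by
          funext i; simp
        rw [harg]


/-- `W²_p(T) = 𝐏_p(ℝ³) + D_a(P_p(ℝ³))` for any point `a`. -/
theorem nedelecW2_eq_poly_add_lift (p : ℕ) (a : Fin 3 → ℝ) :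
    NedelecW2 p =
      {v | ∃ P q, IsPolyVec3 p P ∧ IsPoly3 p q ∧
        ∀ x, v x = P x + Dlift a q x} := by
  ext v
  simp only [NedelecW2, Set.mem_setOf_eq]
  constructor
  · rintro ⟨P, q, hP, ⟨Q, hQd, hQe⟩, hv⟩
    obtain ⟨R, hRd, hR⟩ := dlift_surj' a Q
    refine ⟨fun x => P x + q x • a, fun x => MvPolynomial.eval x R, ?_, ⟨R, hRd.trans hQd,
      fun _ => rfl⟩, ?_⟩
    · intro i
      obtain ⟨Pi, hPid, hPie⟩ := hP i
      refine ⟨Pi + MvPolynomial.C (a i) * Q, ?_, fun x => ?_⟩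
      · refine (MvPolynomial.totalDegree_add _ _).trans (max_le hPid ?_)
        exact (MvPolynomial.totalDegree_mul _ _).trans
          (by simpa [MvPolynomial.totalDegree_C] using hQd)
      · have h1 : P x i = MvPolynomial.eval x Pi := hPie x
        have h2 : (P x + MvPolynomial.eval x Q • a) i
            = P x i + MvPolynomial.eval x Q * a i := rfl
        simp only [map_add, map_mul, MvPolynomial.eval_C, hQe, h2, h1]
        ring
    · intro x
      have hint : Dlift a (fun y => MvPolynomial.eval y R) x = q x • (x - a) := by
        simp only [Dlift]
        rw [hR x, ← hQe x]
      rw [hv x, hint, smul_sub]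
      ext i
      simp only [Pi.add_apply, Pi.sub_apply, Pi.smul_apply, smul_eq_mul]
      ring
  · rintro ⟨P, q, hP, ⟨Q, hQd, hQe⟩, hv⟩
    obtain ⟨R, hRd, hR⟩ := dlift_rep' a Q
    refine ⟨fun x => P x - MvPolynomial.eval x R • a, fun x => MvPolynomial.eval x R, ?_,
      ⟨R, hRd.trans hQd, fun _ => rfl⟩, ?_⟩
    · intro i
      obtain ⟨Pi, hPid, hPie⟩ := hP i
      refine ⟨Pi - MvPolynomial.C (a i) * R, ?_, fun x => ?_⟩
      · refine (MvPolynomial.totalDegree_sub _ _).trans (max_le hPid ?_)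
        exact (MvPolynomial.totalDegree_mul _ _).trans
          (by simpa [MvPolynomial.totalDegree_C] using hRd.trans hQd)
      · have h1 : P x i = MvPolynomial.eval x Pi := hPie x
        have h2 : (P x - MvPolynomial.eval x R • a) i
            = P x i - MvPolynomial.eval x R * a i := rfl
        simp only [map_sub, map_mul, MvPolynomial.eval_C, h2, h1]
        ring
    · intro x
      have hint : Dlift a q x = MvPolynomial.eval x R • (x - a) := by
        simp only [Dlift, hQe]
        rw [hR x]
      rw [hv x, hint, smul_sub]
      ext i
      simp only [Pi.add_apply, Pi.sub_apply, Pi.smul_apply, smul_eq_mul]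
      ring
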